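/- A polynomial p is a polynomial invariant for the initial value x_0 (i.e., the function t ↦ p(x(t; x_0)) is identically zero on the domain of the solution) if and only if every iterated Lie derivative vanishes at x_0: for all j ≥ 0, (L_F^{(j)} p)(x_0) = 0. -/

import Mathlib

open MvPolynomial

noncomputable def lieD {N : ℕ} (F : Fin N → MvPolynomial (Fin N) ℝ)
    (p : MvPolynomial (Fin N) ℝ) : MvPolynomial (Fin N) ℝ :=
  ∑ i, pderiv i p * F i

noncomputable def lieIter {N : ℕ} (F : Fin N → MvPolynomial (Fin N) ℝ) :
    ℕ → MvPolynomial (Fin N) ℝ → MvPolynomial (Fin N) ℝ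
  | 0, p => p
  | j + 1, p => lieD F (lieIter F j p)

lemma lieD_add {N : ℕ} (F : Fin N → MvPolynomial (Fin N) ℝ)
    (a b : MvPolynomial (Fin N) ℝ) : lieD F (a + b) = lieD F a + lieD F b := by
  simp [lieD, map_add, add_mul, Finset.sum_add_distrib]

lemma lieD_mul {N : ℕ} (F : Fin N → MvPolynomial (Fin N) ℝ)
    (a b : MvPolynomial (Fin N) ℝ) :
    lieD F (a * b) = lieD F a * b + a * lieD F b := by
  simp only [lieD, pderiv_mul, add_mul, Finset.sum_add_distrib, Finset.mul_sum,
    Finset.sum_mul]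
  congr 1
  · exact Finset.sum_congr rfl fun i _ => by ring
  · exact Finset.sum_congr rfl fun i _ => by ring

lemma lieD_X {N : ℕ} (F : Fin N → MvPolynomial (Fin N) ℝ) (i : Fin N) :
    lieD F (X i) = F i := by
  classical
  simp only [lieD, pderiv_X]
  rw [Finset.sum_eq_single i]
  · simp
  · intro b _ hb; simp [Pi.single_apply, hb]
  · intro h; exact absurd (Finset.mem_univ i) h

lemma hasDerivAt_eval_comp {N : ℕ} (F : Fin N → MvPolynomial (Fin N) ℝ)
    (x : ℝ → Fin N → ℝ) {t : ℝ}
    (hx : HasDerivAt x (fun i => eval (x t) (F i)) t)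
    (q : MvPolynomial (Fin N) ℝ) :
    HasDerivAt (fun s => eval (x s) q) (eval (x t) (lieD F q)) t := by
  induction q using MvPolynomial.induction_on with
  | C a =>
      simp only [lieD, pderiv_C, zero_mul, Finset.sum_const_zero, eval_C, map_zero]
      exact hasDerivAt_const t a
  | add a b ha hb =>
      simpa [lieD_add, map_add, eval_add, Pi.add_def] using ha.add hb
  | mul_X q i hq =>
      have hxi : HasDerivAt (fun s => x s i) (eval (x t) (F i)) t :=
        hasDerivAt_pi.mp hx i
      have := hq.mul hxi
      simpa [lieD_mul, lieD_X, eval_X, map_add, eval_mul, mul_comm, Pi.mul_def] using this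

theorem invariant_iff_lie_derivs_vanish {N : ℕ}
    (F : Fin N → MvPolynomial (Fin N) ℝ) (x0 : Fin N → ℝ)
    (r : ℝ) (hr : 0 < r) (x : ℝ → Fin N → ℝ)
    (hx0 : x 0 = x0)
    (hode : ∀ t ∈ Set.Ioo (-r) r, HasDerivAt x (fun i => eval (x t) (F i)) t)
    (hanalytic : AnalyticOnNhd ℝ x (Set.Ioo (-r) r))
    (p : MvPolynomial (Fin N) ℝ) :
    (∀ t ∈ Set.Ioo (-r) r, eval (x t) p = 0) ↔
      (∀ j : ℕ, eval x0 (lieIter F j p) = 0) := by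
  have h0mem : (0 : ℝ) ∈ Set.Ioo (-r) r := ⟨by linarith, hr⟩
  have hop : IsOpen (Set.Ioo (-r) r) := isOpen_Ioo
  -- derivative of g_j is g_{j+1}
  have key : ∀ (q : MvPolynomial (Fin N) ℝ), ∀ t ∈ Set.Ioo (-r) r,
      HasDerivAt (fun s => eval (x s) q) (eval (x t) (lieD F q)) t :=
    fun q t ht => hasDerivAt_eval_comp F x (hode t ht) q
  constructor
  · intro hz j
    have : ∀ j, ∀ t ∈ Set.Ioo (-r) r, eval (x t) (lieIter F j p) = 0 := by
      intro j
      induction j with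
      | zero => exact hz
      | succ j ih =>
          intro t ht
          have h1 : HasDerivAt (fun s => eval (x s) (lieIter F j p))
              (eval (x t) (lieIter F (j + 1) p)) t := key _ t ht
          have h2 : HasDerivAt (fun s => eval (x s) (lieIter F j p)) 0 t := by
            refine (hasDerivAt_const t (0 : ℝ)).congr_of_eventuallyEq ?_
            filter_upwards [hop.mem_nhds ht] with s hs using (ih s hs)
          exact (h1.unique h2)
    have := this j 0 h0mem
    rwa [hx0] at this
  · intro hz
    set g : ℝ → ℝ := fun s => eval (x s) p with hg
    have hgan : AnalyticOnNhd ℝ g (Set.Ioo (-r) r) := by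
      intro t ht
      have : ∀ i, AnalyticAt ℝ (fun s => x s i) t := fun i =>
        ((ContinuousLinearMap.proj i : (Fin N → ℝ) →L[ℝ] ℝ).analyticAt _).comp
          (hanalytic t ht)
      have h2 := AnalyticAt.aeval_mvPolynomial this p
      have h3 : ∀ y : Fin N → ℝ, aeval y p = eval y p := fun y => rfl
      simpa [hg, h3] using h2
    -- iterated derivatives of g agree with lie iterates on Ioo
    have hiter : ∀ j, ∀ t ∈ Set.Ioo (-r) r,
        iteratedDeriv j g t = eval (x t) (lieIter F j p) := by
      intro j
      induction j with
      | zero => intro t ht; simp [iteratedDeriv_zero, lieIter, g]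
      | succ j ih =>
          intro t ht
          rw [iteratedDeriv_succ]
          have heq : (iteratedDeriv j g) =ᶠ[nhds t]
              (fun s => eval (x s) (lieIter F j p)) := by
            filter_upwards [hop.mem_nhds ht] with s hs using ih s hs
          rw [heq.deriv_eq]
          exact (key (lieIter F j p) t ht).deriv
    -- all iterated derivatives of g vanish at 0
    have hvan : ∀ j, iteratedDeriv j g 0 = 0 := by
      intro j; rw [hiter j 0 h0mem, hx0]; exact hz j
    -- hence g is eventually zero near 0
    obtain ⟨ps, hps⟩ := hgan 0 h0mem
    obtain ⟨r', hr'⟩ := hps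
    have hps0 : ps = 0 := by
      ext n v
      have h1 := hr'.factorial_smul (1 : ℝ) n
      rw [← iteratedDeriv_eq_iteratedFDeriv] at h1
      have hzn : ps n (fun _ => (1 : ℝ)) = 0 := by
        have := hvan n
        rw [this] at h1
        have hne : (n.factorial : ℝ) ≠ 0 := Nat.cast_ne_zero.mpr n.factorial_ne_zero
        have : (n.factorial : ℝ) * ps n (fun _ => (1 : ℝ)) = 0 := by
          simpa [nsmul_eq_mul] using h1
        exact (mul_eq_zero.mp this).resolve_left hne
      have : ps n = ContinuousMultilinearMap.mkPiRing ℝ (Fin n)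
          (ps n fun _ => 1) := (ContinuousMultilinearMap.mkPiRing_apply_one_eq_self _).symm
      rw [this, hzn]
      simp
    have hev : g =ᶠ[nhds (0 : ℝ)] 0 := by
      rw [hps0] at hr'
      exact hr'.hasFPowerSeriesAt.eventually_eq_zero
    have := hgan.eqOn_zero_of_preconnected_of_eventuallyEq_zero
      (isPreconnected_Ioo) h0mem hev
    intro t ht
    exact this ht
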